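/- Let a < b be reals, 𝓘 = [a,b], let ϕ : 𝓘 → ℝ^μ and h : 𝓘 → ℝ^ϰ be measurable with square-integrable components, assume 𝔥 = ∫_𝓘 h hᵀ dτ ≻ 0, set Γ = ∫_𝓘 ϕ hᵀ dτ, ε(τ) = ϕ(τ) − Γ 𝔥⁻¹ h(τ), and assume 𝔈 = ∫_𝓘 εεᵀ dτ ≻ 0. Let R ∈ ℝ^{n×n} be symmetric positive definite. Then for every square-integrable x : 𝓘 → ℝ^n, ∫_𝓘 x(τ)ᵀ R x(τ) dτ ≥ vᵀ (𝔥⁻¹ ⊗ R) v + wᵀ (𝔈⁻¹ ⊗ R) w, where v = ∫_𝓘 (h(τ) ⊗ I_n) x(τ) dτ ∈ ℝ^{ϰn} and w = ∫_𝓘 (ε(τ) ⊗ I_n) x(τ) dτ ∈ ℝ^{μn}. -/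

import Mathlib

open MeasureTheory Matrix Classical
open scoped Kronecker

/-- The Kronecker product `g ⊗ I_n` of a column vector `g ∈ ℝ^κ`
(indexed by `κI`) with the `n × n` identity matrix. -/
noncomputable def vecKronId {κI : Type*} (g : κI → ℝ) (n : ℕ) :
    Matrix (κI × Fin n) (Fin n) ℝ :=
  fun ki j => g ki.1 * (1 : Matrix (Fin n) (Fin n) ℝ) ki.2 j

/-- The entrywise (cross-)Gram integral `∫_{[a,b]} ϕ(τ) h(τ)ᵀ dτ`. -/
noncomputable def gramOn {μI ϰI : Type*} (a b : ℝ) (ϕ : ℝ → μI → ℝ) (h : ℝ → ϰI → ℝ) :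
    Matrix μI ϰI ℝ :=
  fun i j => ∫ τ in Set.Icc a b, ϕ τ i * h τ j

/-- The positive semidefinite square root `√X` of a positive semidefinite
real matrix (junk value `0` if `X` is not positive semidefinite). -/
noncomputable def psdSqrt {m : Type*} [Fintype m] [DecidableEq m] (X : Matrix m m ℝ) :
    Matrix m m ℝ :=
  if hX : X.PosSemidef then
    hX.1.eigenvectorUnitary.1 * diagonal ((RCLike.ofReal : ℝ → ℝ) ∘ Real.sqrt ∘ hX.1.eigenvalues) *
      (star hX.1.eigenvectorUnitary : Matrix m m ℝ)
  else 0

lemma l2_mul_integrable {ν : Measure ℝ} {f g : ℝ → ℝ}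
    (hf : MemLp f 2 ν) (hg : MemLp g 2 ν) :
    Integrable (fun τ => f τ * g τ) ν := by
  haveI : ENNReal.HolderTriple 2 2 1 := ⟨by rw [ENNReal.inv_two_add_inv_two, inv_one]⟩
  have h := hg.smul hf (p := 2) (q := 2) (r := 1)
  rw [← memLp_one_iff_integrable]
  exact h

lemma mul_sum_integrable {ν : Measure ℝ} {q : ℕ} {f : ℝ → ℝ} (hf : MemLp f 2 ν)
    {g : Fin q → ℝ → ℝ} (hg : ∀ b, MemLp (g b) 2 ν) (β : Fin q → ℝ) :
    Integrable (fun τ => f τ * ∑ b, β b * g b τ) ν := by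
  have : (fun τ => f τ * ∑ b, β b * g b τ) = fun τ => ∑ b, β b * (f τ * g b τ) := by
    funext τ; rw [Finset.mul_sum]; exact Finset.sum_congr rfl fun b _ => by ring
  rw [this]
  exact integrable_finset_sum _ fun b _ => (l2_mul_integrable hf (hg b)).const_mul (β b)

lemma int_mul_sum {ν : Measure ℝ} {q : ℕ} {f : ℝ → ℝ} (hf : MemLp f 2 ν)
    {g : Fin q → ℝ → ℝ} (hg : ∀ b, MemLp (g b) 2 ν) (β : Fin q → ℝ) :
    ∫ τ, f τ * (∑ b, β b * g b τ) ∂ν = ∑ b, β b * ∫ τ, f τ * g b τ ∂ν := by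
  have : (fun τ => f τ * (∑ b, β b * g b τ)) = fun τ => ∑ b, β b * (f τ * g b τ) := by
    funext τ; rw [Finset.mul_sum]; exact Finset.sum_congr rfl fun b _ => by ring
  rw [this, integral_finset_sum _
    (fun b _ => (l2_mul_integrable hf (hg b)).const_mul (β b))]
  simp [integral_const_mul]

lemma int_sum_mul_sum {ν : Measure ℝ} {p q : ℕ}
    {f : Fin p → ℝ → ℝ} (hf : ∀ a, MemLp (f a) 2 ν)
    {g : Fin q → ℝ → ℝ} (hg : ∀ b, MemLp (g b) 2 ν) (α : Fin p → ℝ) (β : Fin q → ℝ) :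
    ∫ τ, (∑ a, α a * f a τ) * (∑ b, β b * g b τ) ∂ν
      = ∑ a, ∑ b, α a * β b * ∫ τ, f a τ * g b τ ∂ν := by
  have : (fun τ => (∑ a, α a * f a τ) * (∑ b, β b * g b τ))
      = fun τ => ∑ a, α a * (f a τ * (∑ b, β b * g b τ)) := by
    funext τ; rw [Finset.sum_mul]; exact Finset.sum_congr rfl fun a _ => by ring
  rw [this, integral_finset_sum _
    (fun a _ => ((mul_sum_integrable (hf a) hg β)).const_mul (α a))]
  refine Finset.sum_congr rfl fun a _ => ?_
  rw [integral_const_mul, int_mul_sum (hf a) hg β, Finset.mul_sum]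
  exact Finset.sum_congr rfl fun b _ => by ring

lemma sumMemLp {ν : Measure ℝ} {q : ℕ} {g : Fin q → ℝ → ℝ}
    (hg : ∀ b, MemLp (g b) 2 ν) (β : Fin q → ℝ) :
    MemLp (fun τ => ∑ b, β b * g b τ) 2 ν := by
  have := memLp_finset_sum (μ := ν) (p := 2) Finset.univ
    (f := fun b τ => β b * g b τ) (fun b _ => (hg b).const_mul (β b))
  simpa using this

lemma int_quad {ν : Measure ℝ} {n : ℕ} (R : Matrix (Fin n) (Fin n) ℝ)
    (z : ℝ → Fin n → ℝ) (hz : ∀ i, MemLp (fun τ => z τ i) 2 ν) :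
    ∫ τ, z τ ⬝ᵥ R *ᵥ z τ ∂ν = ∑ i, ∑ j, R i j * ∫ τ, z τ i * z τ j ∂ν := by
  have hfun : (fun τ => z τ ⬝ᵥ R *ᵥ z τ) = fun τ => ∑ i, ∑ j, R i j * (z τ i * z τ j) := by
    funext τ
    simp only [dotProduct, Matrix.mulVec, Finset.mul_sum]
    exact Finset.sum_congr rfl fun i _ => Finset.sum_congr rfl fun j _ => by ring
  rw [hfun, integral_finset_sum _ (fun i _ => integrable_finset_sum _
    (fun j _ => (l2_mul_integrable (hz i) (hz j)).const_mul (R i j)))]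
  refine Finset.sum_congr rfl fun i _ => ?_
  rw [integral_finset_sum _ (fun j _ => (l2_mul_integrable (hz i) (hz j)).const_mul (R i j))]
  simp [integral_const_mul]

lemma kron_quad {p n : ℕ} (A : Matrix (Fin p) (Fin p) ℝ) (R : Matrix (Fin n) (Fin n) ℝ)
    (v : Fin p × Fin n → ℝ) :
    v ⬝ᵥ (A ⊗ₖ R) *ᵥ v = ∑ i, ∑ j, R i j * ∑ k, (∑ l, A k l * v (l, j)) * v (k, i) := by
  simp only [dotProduct, Matrix.mulVec, kroneckerMap_apply, Fintype.sum_prod_type,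
    Finset.mul_sum, Finset.sum_mul]
  rw [Finset.sum_comm]
  refine Finset.sum_congr rfl fun i _ => ?_
  conv_lhs => rw [show (∀ (f : Fin p → Fin p → Fin n → ℝ),
      (∑ k, ∑ l, ∑ j, f k l j) = ∑ k, ∑ j, ∑ l, f k l j) from
    fun f => Finset.sum_congr rfl fun k _ => Finset.sum_comm]
  rw [Finset.sum_comm]
  refine Finset.sum_congr rfl fun j _ => ?_
  refine Finset.sum_congr rfl fun k _ => ?_
  refine Finset.sum_congr rfl fun l _ => ?_
  ring


/-- **refined least-squares integral inequality.**
With residual `ε = ϕ − Γ 𝔥⁻¹ h` and error Gram `𝔈 = ∫ ε εᵀ ≻ 0`: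
`∫ x(τ)ᵀ R x(τ) dτ ≥ vᵀ (𝔥⁻¹ ⊗ R) v + wᵀ (𝔈⁻¹ ⊗ R) w` where
`v = ∫ (h(τ) ⊗ Iₙ) x(τ) dτ` and `w = ∫ (ε(τ) ⊗ Iₙ) x(τ) dτ`. -/
theorem refined_leastSquares_integral_inequality
    (μ ϰ n : ℕ) (a b : ℝ) (hab : a < b)
    (ϕ : ℝ → Fin μ → ℝ) (h : ℝ → Fin ϰ → ℝ)
    (hϕmeas : ∀ i, Measurable fun τ => ϕ τ i)
    (hhmeas : ∀ i, Measurable fun τ => h τ i)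
    (hϕL2 : ∀ i, MemLp (fun τ => ϕ τ i) 2 (volume.restrict (Set.Icc a b)))
    (hhL2 : ∀ i, MemLp (fun τ => h τ i) 2 (volume.restrict (Set.Icc a b)))
    (𝔥 : Matrix (Fin ϰ) (Fin ϰ) ℝ) (h𝔥 : 𝔥 = gramOn a b h h) (h𝔥pd : 𝔥.PosDef)
    (Γ : Matrix (Fin μ) (Fin ϰ) ℝ) (hΓ : Γ = gramOn a b ϕ h)
    (ε : ℝ → Fin μ → ℝ) (hε : ∀ τ, ε τ = ϕ τ - (Γ * 𝔥⁻¹) *ᵥ h τ)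
    (𝔈 : Matrix (Fin μ) (Fin μ) ℝ) (h𝔈 : 𝔈 = gramOn a b ε ε) (h𝔈pd : 𝔈.PosDef)
    (R : Matrix (Fin n) (Fin n) ℝ) (hR : R.PosDef)
    (x : ℝ → Fin n → ℝ)
    (hxmeas : ∀ i, Measurable fun τ => x τ i)
    (hxL2 : ∀ i, MemLp (fun τ => x τ i) 2 (volume.restrict (Set.Icc a b)))
    (v : Fin ϰ × Fin n → ℝ)
    (hv : v = fun j => ∫ τ in Set.Icc a b, (vecKronId (h τ) n *ᵥ x τ) j)
    (w : Fin μ × Fin n → ℝ)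
    (hw : w = fun j => ∫ τ in Set.Icc a b, (vecKronId (ε τ) n *ᵥ x τ) j) :
    v ⬝ᵥ ((𝔥⁻¹ ⊗ₖ R) *ᵥ v) + w ⬝ᵥ ((𝔈⁻¹ ⊗ₖ R) *ᵥ w) ≤
      ∫ τ in Set.Icc a b, x τ ⬝ᵥ (R *ᵥ x τ) := by
  classical
  have hdet𝔥 : IsUnit 𝔥.det := isUnit_iff_ne_zero.mpr h𝔥pd.det_pos.ne'
  -- ε components in L²
  have hεfun : ∀ i, (fun τ => ε τ i) = fun τ => ϕ τ i - ∑ k, (Γ * 𝔥⁻¹) i k * h τ k := by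
    intro i; funext τ; rw [hε τ]; simp [Matrix.mulVec, dotProduct]
  have hεL2 : ∀ i, MemLp (fun τ => ε τ i) 2 (volume.restrict (Set.Icc a b)) := by
    intro i; rw [hεfun i]
    exact (hϕL2 i).sub (sumMemLp hhL2 _)
  -- Gram identities
  have hGhh : ∀ k l, ∫ τ in Set.Icc a b, h τ k * h τ l = 𝔥 k l := fun k l => by rw [h𝔥]; rfl
  have hGϕh : ∀ i k, ∫ τ in Set.Icc a b, ϕ τ i * h τ k = Γ i k := fun i k => by rw [hΓ]; rfl
  have hGεε : ∀ k l, ∫ τ in Set.Icc a b, ε τ k * ε τ l = 𝔈 k l := fun k l => by rw [h𝔈]; rfl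
  have hvint : ∀ k i, v (k, i) = ∫ τ in Set.Icc a b, h τ k * x τ i := by
    intro k i; rw [hv]
    have hpt : ∀ τ, (vecKronId (h τ) n *ᵥ x τ) (k, i) = h τ k * x τ i := by
      intro τ
      simp [vecKronId, Matrix.mulVec, dotProduct, Matrix.one_apply, ite_mul, mul_ite,
        mul_assoc, Finset.mul_sum]
    simp only [hpt]
  have hwint : ∀ k i, w (k, i) = ∫ τ in Set.Icc a b, ε τ k * x τ i := by
    intro k i; rw [hw]
    have hpt : ∀ τ, (vecKronId (ε τ) n *ᵥ x τ) (k, i) = ε τ k * x τ i := by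
      intro τ
      simp [vecKronId, Matrix.mulVec, dotProduct, Matrix.one_apply, ite_mul, mul_ite,
        mul_assoc, Finset.mul_sum]
    simp only [hpt]
  -- orthogonality of ε and h
  have horth : ∀ l k, ∫ τ in Set.Icc a b, ε τ l * h τ k = 0 := by
    intro l k
    have hfun : (fun τ => ε τ l * h τ k)
        = fun τ => ϕ τ l * h τ k - ∑ m, (Γ * 𝔥⁻¹) l m * (h τ m * h τ k) := by
      funext τ; rw [hε τ]
      simp only [Pi.sub_apply, Matrix.mulVec, dotProduct, sub_mul, Finset.sum_mul]
      congr 1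
      exact Finset.sum_congr rfl fun m _ => by ring
    rw [hfun, integral_sub (l2_mul_integrable (hϕL2 l) (hhL2 k))
      (integrable_finset_sum _ fun m _ =>
        (l2_mul_integrable (hhL2 m) (hhL2 k)).const_mul _)]
    rw [integral_finset_sum _ (fun m _ =>
      (l2_mul_integrable (hhL2 m) (hhL2 k)).const_mul _)]
    have hterm : ∀ m, ∫ τ in Set.Icc a b, (Γ * 𝔥⁻¹) l m * (h τ m * h τ k)
        = (Γ * 𝔥⁻¹) l m * 𝔥 m k := fun m => by rw [integral_const_mul, hGhh]
    simp only [hterm]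
    rw [hGϕh l k, show (∑ m, (Γ * 𝔥⁻¹) l m * 𝔥 m k) = ((Γ * 𝔥⁻¹) * 𝔥) l k from
      (Matrix.mul_apply).symm]
    rw [Matrix.mul_assoc, Matrix.nonsing_inv_mul 𝔥 hdet𝔥, Matrix.mul_one, sub_self]
  have horth' : ∀ k l, ∫ τ in Set.Icc a b, h τ k * ε τ l = 0 := by
    intro k l
    rw [integral_congr_ae (Filter.Eventually.of_forall fun τ => mul_comm (h τ k) (ε τ l))]
    exact horth l k
  -- coefficient vectors and residual function
  set c : Fin ϰ × Fin n → ℝ := fun kp => ∑ l, 𝔥⁻¹ kp.1 l * v (l, kp.2) with hcdef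
  set d : Fin μ × Fin n → ℝ := fun kp => ∑ l, 𝔈⁻¹ kp.1 l * w (l, kp.2) with hddef
  set u : Fin n → ℝ → ℝ :=
    fun i τ => (∑ k, c (k, i) * h τ k) + ∑ k, d (k, i) * ε τ k with hudef
  set y : ℝ → Fin n → ℝ := fun τ i => x τ i - u i τ with hydef
  have huL2 : ∀ i, MemLp (u i) 2 (volume.restrict (Set.Icc a b)) := by
    intro i; rw [hudef]
    exact (sumMemLp hhL2 _).add (sumMemLp hεL2 _)
  have hyL2 : ∀ i, MemLp (fun τ => y τ i) 2 (volume.restrict (Set.Icc a b)) := by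
    intro i; rw [hydef]
    exact (hxL2 i).sub (huL2 i)
  -- cross integrals
  have hxu : ∀ i j, ∫ τ in Set.Icc a b, x τ i * u j τ
      = (∑ k, c (k, j) * v (k, i)) + ∑ k, d (k, j) * w (k, i) := by
    intro i j
    have hsplit : (fun τ => x τ i * u j τ)
        = fun τ => x τ i * (∑ k, c (k, j) * h τ k) + x τ i * (∑ k, d (k, j) * ε τ k) := by
      funext τ; rw [hudef]; ring
    rw [hsplit, integral_add (mul_sum_integrable (hxL2 i) hhL2 _)
      (mul_sum_integrable (hxL2 i) hεL2 _),
      int_mul_sum (hxL2 i) hhL2 _, int_mul_sum (hxL2 i) hεL2 _]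
    congr 1
    · refine Finset.sum_congr rfl fun k _ => ?_
      rw [integral_congr_ae (Filter.Eventually.of_forall fun τ =>
        mul_comm (x τ i) (h τ k)), ← hvint k i]
    · refine Finset.sum_congr rfl fun k _ => ?_
      rw [integral_congr_ae (Filter.Eventually.of_forall fun τ =>
        mul_comm (x τ i) (ε τ k)), ← hwint k i]
  have hux : ∀ i j, ∫ τ in Set.Icc a b, u i τ * x τ j
      = (∑ k, c (k, i) * v (k, j)) + ∑ k, d (k, i) * w (k, j) := by
    intro i j
    rw [integral_congr_ae (Filter.Eventually.of_forall fun τ =>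
      mul_comm (u i τ) (x τ j))]
    exact hxu j i
  -- inverse identities
  have hinv𝔥 : ∀ k j, (∑ l, 𝔥 k l * c (l, j)) = v (k, j) := by
    intro k j
    have h1 : 𝔥 * 𝔥⁻¹ = 1 := Matrix.mul_nonsing_inv _ hdet𝔥
    calc (∑ l, 𝔥 k l * c (l, j))
        = ∑ l, ∑ m, (𝔥 k l * 𝔥⁻¹ l m) * v (m, j) := by
          simp only [hcdef, Finset.mul_sum]
          exact Finset.sum_congr rfl fun l _ => Finset.sum_congr rfl fun m _ => by ring
      _ = ∑ m, (∑ l, 𝔥 k l * 𝔥⁻¹ l m) * v (m, j) := by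
          rw [Finset.sum_comm]
          exact Finset.sum_congr rfl fun m _ => (Finset.sum_mul _ _ _).symm
      _ = v (k, j) := by
          simp only [← Matrix.mul_apply, h1, Matrix.one_apply, ite_mul, one_mul, zero_mul]
          simp
  have hinv𝔈 : ∀ k j, (∑ l, 𝔈 k l * d (l, j)) = w (k, j) := by
    intro k j
    have hdet𝔈 : IsUnit 𝔈.det := isUnit_iff_ne_zero.mpr h𝔈pd.det_pos.ne'
    have h1 : 𝔈 * 𝔈⁻¹ = 1 := Matrix.mul_nonsing_inv _ hdet𝔈
    calc (∑ l, 𝔈 k l * d (l, j))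
        = ∑ l, ∑ m, (𝔈 k l * 𝔈⁻¹ l m) * w (m, j) := by
          simp only [hddef, Finset.mul_sum]
          exact Finset.sum_congr rfl fun l _ => Finset.sum_congr rfl fun m _ => by ring
      _ = ∑ m, (∑ l, 𝔈 k l * 𝔈⁻¹ l m) * w (m, j) := by
          rw [Finset.sum_comm]
          exact Finset.sum_congr rfl fun m _ => (Finset.sum_mul _ _ _).symm
      _ = w (k, j) := by
          simp only [← Matrix.mul_apply, h1, Matrix.one_apply, ite_mul, one_mul, zero_mul]
          simp
  -- Gram of the projection
  have huu : ∀ i j, ∫ τ in Set.Icc a b, u i τ * u j τ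
      = (∑ k, c (k, i) * v (k, j)) + ∑ k, d (k, i) * w (k, j) := by
    intro i j
    have hsplit : (fun τ => u i τ * u j τ) = fun τ =>
        ((∑ k, c (k, i) * h τ k) * (∑ l, c (l, j) * h τ l)
          + (∑ k, c (k, i) * h τ k) * (∑ l, d (l, j) * ε τ l))
        + ((∑ k, d (k, i) * ε τ k) * (∑ l, c (l, j) * h τ l)
          + (∑ k, d (k, i) * ε τ k) * (∑ l, d (l, j) * ε τ l)) := by
      funext τ; rw [hudef]; ring
    have iAh : ∀ (p : Fin n), MemLp (fun τ => ∑ k, c (k, p) * h τ k) 2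
        (volume.restrict (Set.Icc a b)) := fun p => sumMemLp hhL2 _
    have iBe : ∀ (p : Fin n), MemLp (fun τ => ∑ k, d (k, p) * ε τ k) 2
        (volume.restrict (Set.Icc a b)) := fun p => sumMemLp hεL2 _
    rw [hsplit, integral_add ?i1 ?i2, integral_add ?i3 ?i4, integral_add ?i5 ?i6,
      int_sum_mul_sum hhL2 hhL2, int_sum_mul_sum hhL2 hεL2,
      int_sum_mul_sum hεL2 hhL2, int_sum_mul_sum hεL2 hεL2]
    case i1 => exact (l2_mul_integrable (iAh i) (iAh j)).add (l2_mul_integrable (iAh i) (iBe j))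
    case i2 => exact (l2_mul_integrable (iBe i) (iAh j)).add (l2_mul_integrable (iBe i) (iBe j))
    case i3 => exact l2_mul_integrable (iAh i) (iAh j)
    case i4 => exact l2_mul_integrable (iAh i) (iBe j)
    case i5 => exact l2_mul_integrable (iBe i) (iAh j)
    case i6 => exact l2_mul_integrable (iBe i) (iBe j)
    simp only [hGhh, hGεε, horth, horth', mul_zero, Finset.sum_const_zero, add_zero, zero_add]
    congr 1
    · calc (∑ k, ∑ l, c (k, i) * c (l, j) * 𝔥 k l)
          = ∑ k, c (k, i) * ∑ l, 𝔥 k l * c (l, j) := by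
            refine Finset.sum_congr rfl fun k _ => ?_
            rw [Finset.mul_sum]
            exact Finset.sum_congr rfl fun l _ => by ring
        _ = ∑ k, c (k, i) * v (k, j) := by
            exact Finset.sum_congr rfl fun k _ => by rw [hinv𝔥]
    · calc (∑ k, ∑ l, d (k, i) * d (l, j) * 𝔈 k l)
          = ∑ k, d (k, i) * ∑ l, 𝔈 k l * d (l, j) := by
            refine Finset.sum_congr rfl fun k _ => ?_
            rw [Finset.mul_sum]
            exact Finset.sum_congr rfl fun l _ => by ring
        _ = ∑ k, d (k, i) * w (k, j) := by
            exact Finset.sum_congr rfl fun k _ => by rw [hinv𝔈]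
  -- the key expansion
  have key : ∀ i j, ∫ τ in Set.Icc a b, y τ i * y τ j
      = (∫ τ in Set.Icc a b, x τ i * x τ j)
        - ((∑ k, c (k, j) * v (k, i)) + ∑ k, d (k, j) * w (k, i)) := by
    intro i j
    have hsplit : (fun τ => y τ i * y τ j)
        = fun τ => (x τ i * x τ j + u i τ * u j τ) - (x τ i * u j τ + u i τ * x τ j) := by
      funext τ; rw [hydef]; ring
    rw [hsplit, integral_sub ?j1 ?j2, integral_add ?j3 ?j4, integral_add ?j5 ?j6,
      hxu i j, hux i j, huu i j]
    case j1 => exact (l2_mul_integrable (hxL2 i) (hxL2 j)).add (l2_mul_integrable (huL2 i) (huL2 j))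
    case j2 => exact (l2_mul_integrable (hxL2 i) (huL2 j)).add (l2_mul_integrable (huL2 i) (hxL2 j))
    case j3 => exact l2_mul_integrable (hxL2 i) (hxL2 j)
    case j4 => exact l2_mul_integrable (huL2 i) (huL2 j)
    case j5 => exact l2_mul_integrable (hxL2 i) (huL2 j)
    case j6 => exact l2_mul_integrable (huL2 i) (hxL2 j)
    ring
  -- quadratic expansions
  have hx2 := int_quad (ν := volume.restrict (Set.Icc a b)) R x hxL2
  have hy2 := int_quad (ν := volume.restrict (Set.Icc a b)) R y hyL2
  have hpos : 0 ≤ ∫ τ in Set.Icc a b, y τ ⬝ᵥ R *ᵥ y τ :=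
    integral_nonneg fun τ => by simpa using hR.posSemidef.dotProduct_mulVec_nonneg (y τ)
  rw [hy2] at hpos
  have hVv : v ⬝ᵥ ((𝔥⁻¹ ⊗ₖ R) *ᵥ v) = ∑ i, ∑ j, R i j * ∑ k, c (k, j) * v (k, i) := by
    rw [kron_quad]
  have hWw : w ⬝ᵥ ((𝔈⁻¹ ⊗ₖ R) *ᵥ w) = ∑ i, ∑ j, R i j * ∑ k, d (k, j) * w (k, i) := by
    rw [kron_quad]
  have hfin : (∑ i, ∑ j, R i j * ∫ τ in Set.Icc a b, y τ i * y τ j)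
      = (∫ τ in Set.Icc a b, x τ ⬝ᵥ R *ᵥ x τ)
        - (v ⬝ᵥ ((𝔥⁻¹ ⊗ₖ R) *ᵥ v) + w ⬝ᵥ ((𝔈⁻¹ ⊗ₖ R) *ᵥ w)) := by
    rw [hx2, hVv, hWw]
    simp only [key, mul_sub, mul_add, Finset.sum_sub_distrib, Finset.sum_add_distrib]
  rw [hfin] at hpos
  linarith
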